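/- Let K_j be convex bodies in ℝ^n, all contained in a ball B_R, all with Gaussian volume γ_n(K_j) ≥ 1/2, and suppose K_j → K' in the Hausdorff metric where K' is a compact convex set containing the origin. Then the origin lies in the interior of K'. -/

import Mathlib

open MeasureTheory Real Filter
open scoped RealInnerProductSpace ENNReal Topology

/-- The Gaussian volume `γ_n(K) = (1/(√(2π))ⁿ) ∫_K e^{-‖y‖²/2} dy`. -/
noncomputable def gaussianVolume {n : ℕ} (K : Set (EuclideanSpace ℝ (Fin n))) : ℝ :=
  (1 / (Real.sqrt (2 * π)) ^ n) * ∫ y in K, Real.exp (-‖y‖ ^ 2 / 2)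

section Aux

variable {n : ℕ}

/-- Supporting functional: if `0 ∈ K'` but `0 ∉ interior K'`, there is a nonzero vector `x'`
with `⟪y, x'⟫ ≤ 0` for all `y ∈ K'`. -/
lemma aux_sep {K' : Set (EuclideanSpace ℝ (Fin n))} (hK'conv : Convex ℝ K')
    (h0 : (0 : EuclideanSpace ℝ (Fin n)) ∈ K')
    (h0int : (0 : EuclideanSpace ℝ (Fin n)) ∉ interior K') :
    ∃ x' : EuclideanSpace ℝ (Fin n), x' ≠ 0 ∧ ∀ y ∈ K', ⟪y, x'⟫ ≤ 0 := by
  rcases Set.eq_empty_or_nonempty (interior K') with hint | ⟨a, ha⟩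
  · -- empty interior: K' lies in a proper subspace
    have haff : affineSpan ℝ K' ≠ ⊤ := by
      intro htop
      rcases (hK'conv.interior_nonempty_iff_affineSpan_eq_top).2 htop with ⟨x, hx⟩
      simp [hint] at hx
    have hspan : Submodule.span ℝ K' ≠ ⊤ := by
      intro htop
      apply haff
      rw [eq_top_iff]
      intro v _
      have hv : v ∈ Submodule.span ℝ K' := htop ▸ Submodule.mem_top
      have hdir : Submodule.span ℝ K' ≤ (affineSpan ℝ K').direction := by
        rw [direction_affineSpan]
        refine Submodule.span_le.2 fun y hy => ?_
        simpa using vsub_mem_vectorSpan ℝ hy h0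
      have := AffineSubspace.vadd_mem_of_mem_direction (hdir hv) (mem_affineSpan ℝ h0)
      simpa using this
    have horth : (Submodule.span ℝ K')ᗮ ≠ ⊥ := by
      simpa [Submodule.orthogonal_eq_bot_iff] using hspan
    obtain ⟨x', hx'mem, hx'ne⟩ := Submodule.exists_mem_ne_zero_of_ne_bot horth
    refine ⟨x', hx'ne, fun y hy => le_of_eq ?_⟩
    exact (Submodule.mem_orthogonal _ x').1 hx'mem y (Submodule.subset_span hy)
  · -- nonempty interior: Hahn-Banach separation
    obtain ⟨f, hf⟩ := geometric_hahn_banach_open_point (hK'conv.interior) isOpen_interior h0int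
    have hf0 : ∀ b ∈ interior K', f b < 0 := by
      intro b hb
      have := hf b hb
      simpa using this
    have hfy : ∀ y ∈ K', f y ≤ 0 := by
      intro y hy
      have hmem : ∀ t : ℝ, t ∈ Set.Ioo (0 : ℝ) 1 → f (t • a + (1 - t) • y) < 0 := fun t ht =>
        hf0 _ (hK'conv.combo_interior_closure_mem_interior ha (subset_closure hy) ht.1
          (by linarith [ht.2]) (by ring))
      have hc : Continuous fun t : ℝ => f (t • a + (1 - t) • y) :=
        f.continuous.comp ((continuous_id.smul continuous_const).add
          ((continuous_const.sub continuous_id).smul continuous_const))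
      have hcont : Tendsto (fun t : ℝ => f (t • a + (1 - t) • y))
          (nhdsWithin 0 (Set.Ioi 0)) (nhds (f y)) := by
        have h1 := hc.tendsto 0
        simp only [zero_smul, sub_zero, one_smul, zero_add] at h1
        exact h1.mono_left nhdsWithin_le_nhds
      refine le_of_tendsto hcont ?_
      filter_upwards [Ioo_mem_nhdsGT_of_mem (Set.left_mem_Ico.2 one_pos)] with t ht
      exact (hmem t ht).le
    refine ⟨(InnerProductSpace.toDual ℝ (EuclideanSpace ℝ (Fin n))).symm f, ?_, fun y hy => ?_⟩
    · intro hx0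
      have hfz : f = 0 := by
        have := congrArg (InnerProductSpace.toDual ℝ (EuclideanSpace ℝ (Fin n))) hx0
        simpa using this
      rw [hfz] at hf0
      simpa using hf0 a ha
    · rw [real_inner_comm, InnerProductSpace.toDual_symm_apply]
      exact hfy y hy

end Aux

/-- If convex bodies `K_j ⊆ B_R` with `γ_n(K_j) ≥ 1/2` converge in the Hausdorff metric
to a compact convex set `K'` containing the origin, then the origin lies in the interior
of `K'`. -/
theorem origin_mem_interior_of_limit
    {n : ℕ} (R : ℝ)
    (K : ℕ → Set (EuclideanSpace ℝ (Fin n)))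
    (K' : Set (EuclideanSpace ℝ (Fin n)))
    (hKc : ∀ j, IsCompact (K j)) (hKconv : ∀ j, Convex ℝ (K j))
    (hKne : ∀ j, (K j).Nonempty)
    (hKR : ∀ j, K j ⊆ Metric.closedBall (0 : EuclideanSpace ℝ (Fin n)) R)
    (hγ : ∀ j, (1 : ℝ) / 2 ≤ gaussianVolume (K j))
    (hK'c : IsCompact K') (hK'conv : Convex ℝ K')
    (h0 : (0 : EuclideanSpace ℝ (Fin n)) ∈ K')
    (hconv : Tendsto (fun j => Metric.hausdorffDist (K j) K') atTop (nhds 0)) :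
    (0 : EuclideanSpace ℝ (Fin n)) ∈ interior K' := by
  classical
  by_contra h0int
  rcases subsingleton_or_nontrivial (EuclideanSpace ℝ (Fin n)) with hsub | hnt
  · apply h0int
    have hK'univ : K' = Set.univ := Set.eq_univ_of_forall fun x => (Subsingleton.elim x 0) ▸ h0
    rw [hK'univ, interior_univ]
    trivial
  obtain ⟨x', hx'ne, hsep⟩ := aux_sep hK'conv h0 h0int
  have hx'pos : (0 : ℝ) < ‖x'‖ := norm_pos_iff.2 hx'ne
  set f : EuclideanSpace ℝ (Fin n) → ℝ := fun y => Real.exp (-‖y‖ ^ 2 / 2) with hf_def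
  have hf_cont : Continuous f := by
    apply Real.continuous_exp.comp
    exact (continuous_norm.pow 2).neg.div_const 2
  have hf_pos : ∀ y, 0 < f y := fun y => Real.exp_pos _
  set g : EuclideanSpace ℝ (Fin n) → ℝ≥0∞ := fun y => ENNReal.ofReal (f y) with hg_def
  have hg_meas : Measurable g := hf_cont.measurable.ennreal_ofReal
  set ν : Measure (EuclideanSpace ℝ (Fin n)) := volume.withDensity g with hν_def
  -- integrability
  have hint : Integrable f := by
    have h := GaussianFourier.integrable_cexp_neg_mul_sq_norm_add (b := (1/2 : ℂ))
      (by norm_num) 0 (0 : EuclideanSpace ℝ (Fin n))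
    have h2 := h.re
    refine h2.congr (Filter.Eventually.of_forall fun y => ?_)
    simp only [RCLike.re_to_complex, zero_mul, add_zero, hf_def]
    rw [show (-(1/2 : ℂ) * (‖y‖ : ℂ) ^ 2) = ((-‖y‖ ^ 2 / 2 : ℝ) : ℂ) by push_cast; ring,
      Complex.exp_ofReal_re]
  -- total mass
  have htot : (∫ y : EuclideanSpace ℝ (Fin n), f y) = Real.sqrt (2 * π) ^ n := by
    have heq : ∀ y : EuclideanSpace ℝ (Fin n), f y = rexp (-(1/2 : ℝ) * ‖y‖ ^ 2) := fun y => by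
      rw [hf_def]; ring_nf
    calc (∫ y : EuclideanSpace ℝ (Fin n), f y)
        = ∫ y : EuclideanSpace ℝ (Fin n), rexp (-(1/2 : ℝ) * ‖y‖ ^ 2) := by simp_rw [heq]
      _ = (π / (1/2 : ℝ)) ^ ((Module.finrank ℝ (EuclideanSpace ℝ (Fin n)) : ℝ) / 2) :=
          GaussianFourier.integral_rexp_neg_mul_sq_norm (by norm_num)
      _ = Real.sqrt (2 * π) ^ n := by
          have h2 : π / (1/2 : ℝ) = 2 * π := by ring
          rw [finrank_euclideanSpace_fin, h2, Real.sqrt_eq_rpow,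
            ← Real.rpow_natCast ((2 * π) ^ (1/2 : ℝ)) n, ← Real.rpow_mul (by positivity)]
          ring_nf
  have hν_apply : ∀ s : Set (EuclideanSpace ℝ (Fin n)), MeasurableSet s →
      ν s = ENNReal.ofReal (∫ y in s, f y) := by
    intro s hs
    rw [hν_def, withDensity_apply _ hs,
      ← ofReal_integral_eq_lintegral_ofReal hint.integrableOn
        (Filter.Eventually.of_forall fun y => (hf_pos y).le)]
  have hνuniv : ν Set.univ = ENNReal.ofReal (Real.sqrt (2 * π) ^ n) := by
    rw [hν_apply _ MeasurableSet.univ, setIntegral_univ, htot]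
  have hνfin : ∀ s, ν s ≠ ⊤ := fun s =>
    ne_top_of_le_ne_top (by rw [hνuniv]; exact ENNReal.ofReal_ne_top) (measure_mono (Set.subset_univ s))
  -- the halfspaces
  set φ : EuclideanSpace ℝ (Fin n) → ℝ := fun y => ⟪y, x'⟫ with hφ_def
  have hφ_cont : Continuous φ := continuous_id.inner continuous_const
  have hφ_meas : Measurable φ := hφ_cont.measurable
  set Hm : Set (EuclideanSpace ℝ (Fin n)) := φ ⁻¹' Set.Iic 0 with hHm_def
  set Hp : Set (EuclideanSpace ℝ (Fin n)) := φ ⁻¹' Set.Ici 0 with hHp_def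
  have hHm_meas : MeasurableSet Hm := hφ_meas measurableSet_Iic
  have hHp_meas : MeasurableSet Hp := hφ_meas measurableSet_Ici
  -- the hyperplane is null
  have hker : ν (φ ⁻¹' {0}) = 0 := by
    have hpne : LinearMap.ker (innerSL ℝ x' : EuclideanSpace ℝ (Fin n) →ₗ[ℝ] ℝ) ≠ ⊤ := by
      intro h
      apply hx'ne
      have hx'mem : x' ∈ LinearMap.ker (innerSL ℝ x' : EuclideanSpace ℝ (Fin n) →ₗ[ℝ] ℝ) := h ▸ Submodule.mem_top
      have : ⟪x', x'⟫ = 0 := hx'mem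
      exact inner_self_eq_zero.1 this
    have hset : φ ⁻¹' {0} = (LinearMap.ker (innerSL ℝ x' : EuclideanSpace ℝ (Fin n) →ₗ[ℝ] ℝ) : Set (EuclideanSpace ℝ (Fin n))) := by
      ext y
      simp only [Set.mem_preimage, Set.mem_singleton_iff, SetLike.mem_coe, LinearMap.mem_ker,
        ContinuousLinearMap.coe_coe, hφ_def]
      rw [innerSL_apply_apply, real_inner_comm]
    have hvol0 : volume (φ ⁻¹' {0}) = 0 := by
      rw [hset]
      exact Measure.addHaar_submodule _ _ hpne
    exact (withDensity_absolutelyContinuous volume g) hvol0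
  -- symmetry: the two halfspaces have equal mass
  have hnegpre : Neg.neg ⁻¹' Hp = Hm := by
    ext y
    simp only [Set.mem_preimage, hHp_def, hHm_def, Set.mem_Ici, Set.mem_Iic, hφ_def,
      inner_neg_left]
    rw [neg_nonneg]
  have hsym : ν Hm = ν Hp := by
    have hmp : MeasurePreserving (Neg.neg)
        (volume : Measure (EuclideanSpace ℝ (Fin n))) volume :=
      Measure.measurePreserving_neg _
    have hemb : MeasurableEmbedding (Neg.neg : EuclideanSpace ℝ (Fin n) → _) :=
      (MeasurableEquiv.neg (EuclideanSpace ℝ (Fin n))).measurableEmbedding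
    have hgneg : ∀ y : EuclideanSpace ℝ (Fin n), g (-y) = g y := fun y => by
      simp [hg_def, hf_def]
    calc ν Hm = ∫⁻ y in Neg.neg ⁻¹' Hp, g y ∂volume := by
          rw [hν_def, withDensity_apply _ hHm_meas, hnegpre]
      _ = ∫⁻ y in Neg.neg ⁻¹' Hp, g (-y) ∂volume := lintegral_congr fun y => (hgneg y).symm
      _ = ∫⁻ y in Hp, g y ∂volume := hmp.setLIntegral_comp_preimage_emb hemb g Hp
      _ = ν Hp := (withDensity_apply _ hHp_meas).symm
  have hhalf : ν Hm + ν Hm = ν Set.univ := by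
    have hu := measure_union_add_inter (μ := ν) Hm hHp_meas
    have hunion : Hm ∪ Hp = Set.univ := by
      ext y
      simp only [Set.mem_union, Set.mem_univ, iff_true, hHm_def, hHp_def, Set.mem_preimage,
        Set.mem_Iic, Set.mem_Ici]
      exact le_total (φ y) 0
    have hinter : Hm ∩ Hp = φ ⁻¹' {0} := by
      ext y
      simp only [Set.mem_inter_iff, hHm_def, hHp_def, Set.mem_preimage, Set.mem_Iic,
        Set.mem_Ici, Set.mem_singleton_iff]
      constructor
      · rintro ⟨h1, h2⟩; exact le_antisymm h1 h2
      · intro h; exact ⟨le_of_eq h, ge_of_eq h⟩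
    rw [hunion, hinter, hker, add_zero] at hu
    rw [← hsym] at hu
    exact hu.symm
  -- positive mass outside the ball in the halfspace
  set B : Set (EuclideanSpace ℝ (Fin n)) := Metric.closedBall 0 R with hB_def
  have hB_meas : MeasurableSet B := measurableSet_closedBall
  have hc₀pos : 0 < ν (Hm \ B) := by
    set y₀ : EuclideanSpace ℝ (Fin n) := (-(|R| + 1) / ‖x'‖) • x' with hy₀_def
    have hy₀1 : φ y₀ < 0 := by
      rw [hφ_def]
      simp only [hy₀_def, inner_smul_left, conj_trivial]
      rw [real_inner_self_eq_norm_sq]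
      have : -(|R| + 1) / ‖x'‖ * ‖x'‖ ^ 2 < 0 := by
        apply mul_neg_of_neg_of_pos
        · apply div_neg_of_neg_of_pos _ hx'pos
          have : (0:ℝ) ≤ |R| := abs_nonneg R
          linarith
        · positivity
      exact this
    have hy₀2 : y₀ ∉ B := by
      rw [hB_def, Metric.mem_closedBall, dist_zero_right, hy₀_def, norm_smul]
      rw [norm_div, Real.norm_eq_abs, Real.norm_eq_abs, abs_neg]
      rw [abs_of_nonneg (by positivity : (0:ℝ) ≤ |R| + 1), abs_of_nonneg hx'pos.le]
      rw [div_mul_cancel₀ _ hx'pos.ne']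
      push_neg
      have : R ≤ |R| := le_abs_self R
      linarith
    set U : Set (EuclideanSpace ℝ (Fin n)) := φ ⁻¹' Set.Iio 0 ∩ Bᶜ with hU_def
    have hUopen : IsOpen U := (isOpen_Iio.preimage hφ_cont).inter
      (Metric.isClosed_closedBall.isOpen_compl)
    have hUsub : U ⊆ Hm \ B := by
      rintro y ⟨hy1, hy2⟩
      exact ⟨Set.mem_preimage.2 (Set.mem_Iic.2 (le_of_lt hy1)), hy2⟩
    have hUpos : 0 < ν U := by
      rw [pos_iff_ne_zero]
      intro h0'
      rw [hν_def, withDensity_apply_eq_zero hg_meas] at h0'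
      have hgU : {x | g x ≠ 0} ∩ U = U := by
        apply Set.inter_eq_self_of_subset_right
        intro x _
        simp only [Set.mem_setOf_eq, hg_def]
        exact (ENNReal.ofReal_pos.2 (hf_pos x)).ne'
      rw [hgU] at h0'
      exact (hUopen.measure_pos volume ⟨y₀, hy₀1, hy₀2⟩).ne' h0'
    exact lt_of_lt_of_le hUpos (measure_mono hUsub)
  -- slabs tend to zero
  set S : ℕ → Set (EuclideanSpace ℝ (Fin n)) := fun k => φ ⁻¹' Set.Ioc 0 (1/(k+1 : ℝ))
    with hS_def
  have hS_meas : ∀ k, MeasurableSet (S k) := fun k => hφ_meas measurableSet_Ioc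
  have hS_anti : Antitone S := by
    intro k l hkl y hy
    refine ⟨hy.1, hy.2.trans ?_⟩
    apply one_div_le_one_div_of_le
    · positivity
    · have : (k : ℝ) ≤ l := Nat.cast_le.2 hkl
      linarith
  have hS_inter : ⋂ k, S k = ∅ := by
    ext y
    simp only [Set.mem_iInter, Set.mem_empty_iff_false, iff_false]
    intro hall
    obtain ⟨k, hk⟩ := exists_nat_one_div_lt (hall 0).1
    exact absurd ((hall k).2) (not_le.2 hk)
  have hS_tendsto : Tendsto (fun k => ν (S k)) atTop (nhds 0) := by
    have h := tendsto_measure_iInter_atTop (μ := ν)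
      (fun k => (hS_meas k).nullMeasurableSet) hS_anti ⟨0, hνfin _⟩
    rw [hS_inter, measure_empty] at h
    exact h
  obtain ⟨k, hk⟩ := (hS_tendsto.eventually_lt_const hc₀pos).exists
  -- choose j with small Hausdorff distance
  obtain ⟨j, hjlt⟩ := (hconv.eventually_lt_const
    (by positivity : (0:ℝ) < 1/((k+1 : ℝ) * ‖x'‖))).exists
  -- K j is inside B ∩ {φ ≤ 1/(k+1)}
  have hKj_sub : K j ⊆ B ∩ (φ ⁻¹' Set.Iic (1/(k+1 : ℝ))) := by
    intro y hy
    refine ⟨hKR j hy, ?_⟩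
    have hfin' : EMetric.hausdorffEdist (K j) K' ≠ ⊤ :=
      Metric.hausdorffEdist_ne_top_of_nonempty_of_bounded (hKne j) ⟨0, h0⟩
        (hKc j).isBounded hK'c.isBounded
    have h1 : Metric.infDist y K' ≤ Metric.hausdorffDist (K j) K' :=
      Metric.infDist_le_hausdorffDist_of_mem hy hfin'
    obtain ⟨z, hz, hzd⟩ := hK'c.exists_infDist_eq_dist ⟨0, h0⟩ y
    have h2 : φ y ≤ dist y z * ‖x'‖ := by
      have heq : φ y = ⟪y - z, x'⟫ + φ z := by
        rw [hφ_def]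
        simp only [inner_sub_left]
        ring
      have hcs : ⟪y - z, x'⟫ ≤ ‖y - z‖ * ‖x'‖ := real_inner_le_norm _ _
      have hz0 : φ z ≤ 0 := hsep z hz
      calc φ y = ⟪y - z, x'⟫ + φ z := heq
        _ ≤ ‖y - z‖ * ‖x'‖ + 0 := add_le_add hcs hz0
        _ = dist y z * ‖x'‖ := by rw [dist_eq_norm]; ring
    have h3 : Metric.infDist y K' ≤ 1/((k+1 : ℝ) * ‖x'‖) := (h1.trans_lt hjlt).le
    have : φ y ≤ 1/(k+1 : ℝ) := by
      calc φ y ≤ dist y z * ‖x'‖ := h2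
        _ = Metric.infDist y K' * ‖x'‖ := by rw [hzd]
        _ ≤ (1/((k+1 : ℝ) * ‖x'‖)) * ‖x'‖ := mul_le_mul_of_nonneg_right h3 hx'pos.le
        _ = 1/(k+1 : ℝ) := by field_simp
    exact this
  have hsplit : B ∩ (φ ⁻¹' Set.Iic (1/(k+1 : ℝ))) ⊆ (Hm ∩ B) ∪ S k := by
    intro y hy
    rcases le_or_gt (φ y) 0 with h | h
    · exact Or.inl ⟨h, hy.1⟩
    · exact Or.inr ⟨h, hy.2⟩
  have hlt : ν (K j) < ν Hm := by
    calc ν (K j) ≤ ν ((Hm ∩ B) ∪ S k) := measure_mono (hKj_sub.trans hsplit)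
      _ ≤ ν (Hm ∩ B) + ν (S k) := measure_union_le _ _
      _ < ν (Hm ∩ B) + ν (Hm \ B) := ENNReal.add_lt_add_left (hνfin _) hk
      _ = ν Hm := measure_inter_add_diff Hm hB_meas
  -- numeric contradiction
  have hKj_meas : MeasurableSet (K j) := (hKc j).measurableSet
  have hγj := hγ j
  rw [gaussianVolume] at hγj
  have hiKj : (∫ y in K j, Real.exp (-‖y‖ ^ 2 / 2)) = (ν (K j)).toReal := by
    rw [hν_apply _ hKj_meas, ENNReal.toReal_ofReal]
    exact integral_nonneg fun y => (hf_pos y).le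
  rw [hiKj] at hγj
  have htoRealHm : (ν Hm).toReal = Real.sqrt (2 * π) ^ n / 2 := by
    have h := congrArg ENNReal.toReal hhalf
    rw [ENNReal.toReal_add (hνfin _) (hνfin _), hνuniv,
      ENNReal.toReal_ofReal (by positivity)] at h
    linarith
  have hlt' : (ν (K j)).toReal < (ν Hm).toReal :=
    (ENNReal.toReal_lt_toReal (hνfin _) (hνfin _)).2 hlt
  have hsq : (0 : ℝ) < Real.sqrt (2 * π) ^ n := by positivity
  have h5 : Real.sqrt (2 * π) ^ n * (1/2) ≤
      Real.sqrt (2 * π) ^ n * ((1 / Real.sqrt (2 * π) ^ n) * (ν (K j)).toReal) :=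
    mul_le_mul_of_nonneg_left hγj hsq.le
  have h6 : Real.sqrt (2 * π) ^ n * ((1 / Real.sqrt (2 * π) ^ n) * (ν (K j)).toReal)
      = (ν (K j)).toReal := by field_simp
  linarith
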